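/- If d ≥ 0 then k11(η) > 0. (In particular, the sun-pointing attitude stability condition k11(η) > 0 holds for every position of the bus in front of the sail.) -/
import Mathlib


open Real

/-- Solar-radiation-pressure torque coefficient `k11`. -/
noncomputable def k11 (w mb ms d α η : ℝ) : ℝ :=
  Real.sin α * (2 * d * mb * (2 * η * Real.cos (2 * α) + η + 1) +
    w * (mb + ms) * (Real.cos α - η * Real.cos (3 * α)))

theorem stmt2 (w mb ms d α η : ℝ) (hw : 0 < w) (hmb : 0 < mb) (hms : 0 < ms)
    (hα : α ∈ Set.Ioo 0 (π / 2)) (hη : η ∈ Set.Ioo (0:ℝ) 1) (hd : d ≥ 0) :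
    k11 w mb ms d α η > 0 := by
  obtain ⟨hα0, hα2⟩ := hα
  obtain ⟨hη0, hη1⟩ := hη
  have hs : 0 < Real.sin α := Real.sin_pos_of_pos_of_lt_pi hα0 (by linarith [Real.pi_pos])
  have hc : 0 < Real.cos α := Real.cos_pos_of_mem_Ioo ⟨by linarith [Real.pi_pos], hα2⟩
  have hc1 : Real.cos α ≤ 1 := Real.cos_le_one α
  unfold k11
  rw [Real.cos_two_mul, Real.cos_three_mul]
  apply mul_pos hs
  have h1 : 2 * d * mb * (2 * η * (2 * Real.cos α ^ 2 - 1) + η + 1) ≥ 0 := by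
    apply mul_nonneg (by positivity)
    nlinarith [sq_nonneg (Real.cos α)]
  have h2 : 0 < w * (mb + ms) * (Real.cos α - η * (4 * Real.cos α ^ 3 - 3 * Real.cos α)) := by
    apply mul_pos (by positivity)
    nlinarith [mul_pos hc (show (0:ℝ) < 1 - η by linarith), mul_nonneg (mul_nonneg hη0.le hc.le) (show (0:ℝ) ≤ 1 - Real.cos α ^ 2 by nlinarith)]
  linarith
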